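/- Let β ≠ 0 and K : [0,∞) → ℝ be measurable with α := β²∫₀^∞ K(s)² ds < 1. If r : [0,∞) → [0,∞) is a nonnegative locally integrable function satisfying the resolvent equation r(t) = β² K(t)² + β² ∫₀ᵗ K(t−s)² r(s) ds for almost every t ≥ 0, then r is integrable on (0,∞) and ∫₀^∞ r(s) ds = α/(1 − α). -/

import Mathlib

open MeasureTheory Filter Set
open scoped ENNReal

namespace ResolventAux

lemma translate (g : ℝ → ℝ) (hg : Measurable g) (s : ℝ) :
    ∫⁻ t in Ioi s, ENNReal.ofReal (g (t - s)) = ∫⁻ u in Ioi (0:ℝ), ENNReal.ofReal (g u) := by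
  have hmap : volume.restrict (Ioi s) = Measure.map (· + s) (volume.restrict (Ioi 0)) := by
    rw [show Ioi (0:ℝ) = (· + s) ⁻¹' (Ioi s) by ext x; simp,
      ← Measure.restrict_map (measurable_add_const s) measurableSet_Ioi,
      map_add_right_eq_self volume s]
  rw [hmap, lintegral_map (by fun_prop) (measurable_add_const s)]
  simp

lemma Fmeas (g r' : ℝ → ℝ) (hg : Measurable g) (hr' : Measurable r') :
    Measurable (Function.uncurry (fun t s =>
      Set.indicator {p : ℝ × ℝ | 0 < p.2 ∧ p.2 < p.1}
        (fun p => ENNReal.ofReal (g (p.1 - p.2)) * ENNReal.ofReal (r' p.2)) (t, s))) := by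
  apply Measurable.indicator
  · fun_prop
  · exact (measurableSet_lt measurable_const measurable_snd).inter
      (measurableSet_lt measurable_snd measurable_fst)

lemma Lrw (g r' : ℝ → ℝ) (t : ℝ) :
    (∫⁻ s in Ioo 0 t, ENNReal.ofReal (g (t - s)) * ENNReal.ofReal (r' s))
      = ∫⁻ s, Set.indicator {p : ℝ × ℝ | 0 < p.2 ∧ p.2 < p.1}
          (fun p => ENNReal.ofReal (g (p.1 - p.2)) * ENNReal.ofReal (r' p.2)) (t, s) := by
  rw [← lintegral_indicator measurableSet_Ioo]
  congr 1

lemma Lmeas (g r' : ℝ → ℝ) (hg : Measurable g) (hr' : Measurable r') :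
    Measurable (fun t => ∫⁻ s in Ioo 0 t,
      ENNReal.ofReal (g (t - s)) * ENNReal.ofReal (r' s)) := by
  simp only [Lrw]
  exact Measurable.lintegral_prod_right (Fmeas g r' hg hr')

lemma swap_lemma (g r' : ℝ → ℝ) (hg : Measurable g) (hr' : Measurable r')
    (U : Set ℝ) (hU : MeasurableSet U) :
    ∫⁻ t in U, ∫⁻ s in Ioo 0 t, ENNReal.ofReal (g (t - s)) * ENNReal.ofReal (r' s) =
      ∫⁻ s in Ioi (0:ℝ), ENNReal.ofReal (r' s) *
        ∫⁻ t in U ∩ Ioi s, ENNReal.ofReal (g (t - s)) := by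
  set F : ℝ → ℝ → ℝ≥0∞ := fun t s =>
    Set.indicator {p : ℝ × ℝ | 0 < p.2 ∧ p.2 < p.1}
      (fun p => ENNReal.ofReal (g (p.1 - p.2)) * ENNReal.ofReal (r' p.2)) (t, s) with hF
  have hmeasF : Measurable (Function.uncurry F) := Fmeas g r' hg hr'
  have h1 : ∀ t, (∫⁻ s in Ioo 0 t, ENNReal.ofReal (g (t - s)) * ENNReal.ofReal (r' s))
      = ∫⁻ s, F t s := Lrw g r'
  have h2 : ∀ s, (∫⁻ t, F t s ∂(volume.restrict U))
      = Set.indicator (Ioi (0:ℝ)) (fun s => ENNReal.ofReal (r' s) *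
          ∫⁻ t in U ∩ Ioi s, ENNReal.ofReal (g (t - s))) s := by
    intro s
    by_cases hs : 0 < s
    · have : ∀ t, F t s = Set.indicator (Ioi s)
          (fun t => ENNReal.ofReal (g (t - s)) * ENNReal.ofReal (r' s)) t := by
        intro t
        simp only [hF, Set.indicator, mem_Ioi, mem_setOf_eq, hs, true_and]
      simp only [this]
      rw [lintegral_indicator measurableSet_Ioi, Measure.restrict_restrict measurableSet_Ioi,
        Set.indicator_of_mem (mem_Ioi.2 hs), Set.inter_comm,
        lintegral_mul_const _ (by fun_prop), mul_comm]
    · have : ∀ t, F t s = 0 := by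
        intro t; simp only [hF, Set.indicator, mem_setOf_eq]; simp [hs]
      simp only [this, lintegral_zero]
      rw [Set.indicator_of_notMem (by simpa using hs)]
  simp only [h1]
  rw [lintegral_lintegral_swap (hmeasF.aemeasurable)]
  simp only [h2]
  rw [lintegral_indicator measurableSet_Ioi]

end ResolventAux

/-- Key resolvent estimate from the proof of Proposition 4.2: if `r ≥ 0` is locally
integrable and solves `r(t) = β² K(t)² + β² ∫₀ᵗ K(t−s)² r(s) ds` a.e. on `(0,∞)`, with
`α := β² ∫₀^∞ K² < 1`, then `r ∈ L¹(0,∞)` and `∫₀^∞ r = α/(1 − α)`. -/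
theorem blackScholesLongMemory_resolvent_integrable
    (β : ℝ) (hβ : β ≠ 0)
    (K : ℝ → ℝ) (hKmeas : Measurable K)
    (hKL2 : IntegrableOn (fun s => K s ^ 2) (Ioi 0))
    (hα : β ^ 2 * ∫ s in Ioi (0:ℝ), K s ^ 2 < 1)
    (r : ℝ → ℝ) (hrnonneg : ∀ t ≥ (0:ℝ), 0 ≤ r t)
    (hrloc : ∀ T > (0:ℝ), IntegrableOn r (Icc 0 T))
    (heq : ∀ᵐ t ∂(volume.restrict (Ioi (0:ℝ))),
      r t = β ^ 2 * K t ^ 2 + β ^ 2 * ∫ s in (0:ℝ)..t, K (t - s) ^ 2 * r s) :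
    IntegrableOn r (Ioi 0) ∧
      ∫ s in Ioi (0:ℝ), r s =
        (β ^ 2 * ∫ s in Ioi (0:ℝ), K s ^ 2) / (1 - β ^ 2 * ∫ s in Ioi (0:ℝ), K s ^ 2) := by
  set α : ℝ := β ^ 2 * ∫ s in Ioi (0:ℝ), K s ^ 2 with hαdef
  have hαnn : 0 ≤ α :=
    mul_nonneg (sq_nonneg β) (setIntegral_nonneg measurableSet_Ioi fun x _ => sq_nonneg _)
  set g : ℝ → ℝ := fun u => β ^ 2 * K u ^ 2 with hgdef
  have hgmeas : Measurable g := by fun_prop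
  have hgnn : ∀ x, 0 ≤ g x := fun x => mul_nonneg (sq_nonneg β) (sq_nonneg _)
  have hgint : IntegrableOn g (Ioi 0) := hKL2.const_mul _
  have hgα : ∫ t in Ioi (0:ℝ), g t = α := integral_const_mul _ _
  set A : ℝ≥0∞ := ∫⁻ t in Ioi (0:ℝ), ENNReal.ofReal (g t) with hAdef
  have hA : A = ENNReal.ofReal α := by
    rw [hAdef, ← ofReal_integral_eq_lintegral_ofReal hgint (ae_of_all _ hgnn), hgα]
  have hA1 : A < 1 := by rw [hA]; exact ENNReal.ofReal_lt_one.2 hα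
  have hAtop : A ≠ ⊤ := hA1.ne_top
  -- measurable nonnegative representative of r
  obtain ⟨r', hr'meas, hr'nn, hrr'⟩ : ∃ r' : ℝ → ℝ, Measurable r' ∧ (∀ x, 0 ≤ r' x) ∧
      r =ᵐ[volume.restrict (Ioi (0:ℝ))] r' := by
    have hraem : AEMeasurable r (volume.restrict (Ioi (0:ℝ))) := by
      have hcover : Ioi (0:ℝ) = ⋃ n : ℕ, Ioc (0:ℝ) (n + 1) := by
        ext x
        simp only [mem_Ioi, mem_iUnion, mem_Ioc]
        constructor
        · intro hx
          obtain ⟨n, hn⟩ := exists_nat_ge x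
          exact ⟨n, hx, hn.trans (by linarith)⟩
        · rintro ⟨n, hx, -⟩; exact hx
      rw [hcover, aemeasurable_iUnion_iff]
      intro n
      have h1 := (hrloc (n + 1) (by positivity)).aemeasurable
      exact h1.mono_measure (Measure.restrict_mono Ioc_subset_Icc_self le_rfl)
    refine ⟨fun x => max (hraem.mk r x) 0, hraem.measurable_mk.max measurable_const,
      fun x => le_max_right _ _, ?_⟩
    filter_upwards [hraem.ae_eq_mk, ae_restrict_mem measurableSet_Ioi] with x hx hmem
    rw [← hx, max_eq_left (hrnonneg x (le_of_lt hmem))]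
  set L : ℝ → ℝ≥0∞ := fun t => ∫⁻ s in Ioo 0 t,
    ENNReal.ofReal (g (t - s)) * ENNReal.ofReal (r' s) with hLdef
  have hLmeas : Measurable L := ResolventAux.Lmeas g r' hgmeas hr'meas
  set I : ℝ≥0∞ := ∫⁻ t in Ioi (0:ℝ), ENNReal.ofReal (r' t) with hIdef
  have hIr : I = ∫⁻ t in Ioi (0:ℝ), ENNReal.ofReal (r t) :=
    (lintegral_congr_ae (hrr'.mono fun x hx => by rw [hx])).symm
  -- rewrite the resolvent equation with g
  have heq' : ∀ᵐ t ∂(volume.restrict (Ioi (0:ℝ))),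
      r t = g t + ∫ s in (0:ℝ)..t, g (t - s) * r s := by
    filter_upwards [heq] with t ht
    rw [ht, hgdef]
    congr 1
    rw [← intervalIntegral.integral_const_mul]
    congr 1; ext s; ring
  -- relation between the interval integral and L t
  have hofc : ∀ t ∈ Ioi (0:ℝ),
      ENNReal.ofReal (∫ s in (0:ℝ)..t, g (t - s) * r s) ≤ L t ∧
      (L t < ⊤ → ENNReal.ofReal (∫ s in (0:ℝ)..t, g (t - s) * r s) = L t) := by
    intro t ht
    have hsub : Ioo (0:ℝ) t ⊆ Ioi 0 := Ioo_subset_Ioi_self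
    have hae : (fun s => g (t - s) * r s)
        =ᵐ[volume.restrict (Ioo (0:ℝ) t)] (fun s => g (t - s) * r' s) :=
      (ae_restrict_of_ae_restrict_of_subset hsub hrr').mono fun s hs => by dsimp only; rw [hs]
    have step1 : (∫ s in (0:ℝ)..t, g (t - s) * r s)
        = ∫ s in Ioo (0:ℝ) t, g (t - s) * r' s := by
      rw [intervalIntegral.integral_of_le (le_of_lt ht), integral_Ioc_eq_integral_Ioo,
        integral_congr_ae hae]
    have hLrw : L t = ∫⁻ s in Ioo (0:ℝ) t, ENNReal.ofReal (g (t - s) * r' s) :=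
      lintegral_congr fun s => (ENNReal.ofReal_mul (hgnn _)).symm
    by_cases hint : Integrable (fun s => g (t - s) * r' s) (volume.restrict (Ioo (0:ℝ) t))
    · have heqL : ENNReal.ofReal (∫ s in (0:ℝ)..t, g (t - s) * r s) = L t := by
        rw [step1, ofReal_integral_eq_lintegral_ofReal hint
          (ae_of_all _ fun s => mul_nonneg (hgnn _) (hr'nn _)), hLrw]
      exact ⟨heqL.le, fun _ => heqL⟩
    · constructor
      · rw [step1, integral_undef hint]; simp
      · intro hfin
        refine absurd (⟨(by fun_prop : Measurable fun s => g (t - s) * r' s).aestronglyMeasurable,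
            ?_⟩ : Integrable (fun s => g (t - s) * r' s) (volume.restrict (Ioo (0:ℝ) t))) hint
        rw [hasFiniteIntegral_iff_ofReal (ae_of_all _ fun s => mul_nonneg (hgnn _) (hr'nn _))]
        rwa [hLrw] at hfin
  -- the swap identities
  have hswapfull : ∫⁻ t in Ioi (0:ℝ), L t = A * I := by
    rw [hLdef, ResolventAux.swap_lemma g r' hgmeas hr'meas (Ioi 0) measurableSet_Ioi]
    have hptw : ∀ s ∈ Ioi (0:ℝ), ENNReal.ofReal (r' s) *
        (∫⁻ t in Ioi (0:ℝ) ∩ Ioi s, ENNReal.ofReal (g (t - s)))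
        = ENNReal.ofReal (r' s) * A := by
      intro s hs
      rw [Set.inter_eq_self_of_subset_right (Ioi_subset_Ioi (le_of_lt hs)),
        ResolventAux.translate g hgmeas s]
    rw [setLIntegral_congr_fun measurableSet_Ioi hptw,
      lintegral_mul_const _ (by fun_prop), hIdef, mul_comm]
  have hswapT : ∀ T : ℝ, 0 < T →
      (∫⁻ t in Ioo (0:ℝ) T, L t) ≤ A * ∫⁻ s in Ioo (0:ℝ) T, ENNReal.ofReal (r' s) := by
    intro T hT
    rw [hLdef, ResolventAux.swap_lemma g r' hgmeas hr'meas (Ioo 0 T) measurableSet_Ioo]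
    have hptw : ∀ s, s ∈ Ioi (0:ℝ) → ENNReal.ofReal (r' s) *
        (∫⁻ t in Ioo (0:ℝ) T ∩ Ioi s, ENNReal.ofReal (g (t - s)))
        ≤ Set.indicator (Ioo (0:ℝ) T) (fun s => ENNReal.ofReal (r' s) * A) s := by
      intro s hs
      by_cases hsT : s < T
      · rw [Set.indicator_of_mem (mem_Ioo.2 ⟨mem_Ioi.1 hs, hsT⟩)]
        refine mul_le_mul_right ?_ _
        refine le_trans (lintegral_mono_set (inter_subset_right)) ?_
        rw [ResolventAux.translate g hgmeas s]
      · have hempty : Ioo (0:ℝ) T ∩ Ioi s = ∅ :=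
          eq_empty_iff_forall_notMem.2 fun x hx => hsT (lt_trans (mem_Ioi.1 hx.2) hx.1.2)
        rw [hempty]
        simp
    calc ∫⁻ s in Ioi (0:ℝ), ENNReal.ofReal (r' s) *
          ∫⁻ t in Ioo (0:ℝ) T ∩ Ioi s, ENNReal.ofReal (g (t - s))
        ≤ ∫⁻ s in Ioi (0:ℝ),
            Set.indicator (Ioo (0:ℝ) T) (fun s => ENNReal.ofReal (r' s) * A) s :=
          setLIntegral_mono_ae ((by fun_prop : Measurable fun s =>
            ENNReal.ofReal (r' s) * A).indicator measurableSet_Ioo).aemeasurable (ae_of_all _ hptw)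
      _ = ∫⁻ s in Ioo (0:ℝ) T, ENNReal.ofReal (r' s) * A := by
          rw [lintegral_indicator measurableSet_Ioo,
            Measure.restrict_restrict measurableSet_Ioo,
            Set.inter_eq_self_of_subset_left Ioo_subset_Ioi_self]
      _ = A * ∫⁻ s in Ioo (0:ℝ) T, ENNReal.ofReal (r' s) := by
          rw [lintegral_mul_const _ (by fun_prop), mul_comm]
  -- truncated bound
  set c : ℝ≥0∞ := ENNReal.ofReal (α / (1 - α)) with hcdef
  have htrunc : ∀ T : ℝ, 0 < T → (∫⁻ t in Ioo (0:ℝ) T, ENNReal.ofReal (r' t)) ≤ c := by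
    intro T hT
    set IT : ℝ≥0∞ := ∫⁻ t in Ioo (0:ℝ) T, ENNReal.ofReal (r' t) with hITdef
    have hITr : IT = ∫⁻ t in Ioo (0:ℝ) T, ENNReal.ofReal (r t) :=
      (lintegral_congr_ae ((ae_restrict_of_ae_restrict_of_subset Ioo_subset_Ioi_self
        hrr').mono fun x hx => by rw [hx])).symm
    have hITtop : IT ≠ ⊤ := by
      rw [hITr]
      have hle : (∫⁻ t in Ioo (0:ℝ) T, ENNReal.ofReal (r t))
          ≤ ∫⁻ t in Icc (0:ℝ) T, ‖r t‖₊ := by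
        refine le_trans (lintegral_mono_set Ioo_subset_Icc_self) (lintegral_mono fun t => ?_)
        exact (ENNReal.ofReal_le_ofReal (le_abs_self _)).trans_eq (Real.enorm_eq_ofReal_abs _).symm
      exact (hle.trans_lt (hrloc T hT).2).ne
    have hkey : IT ≤ A + A * IT := by
      have hmono : ∀ᵐ t ∂(volume.restrict (Ioo (0:ℝ) T)),
          ENNReal.ofReal (r t) ≤ ENNReal.ofReal (g t) + L t := by
        filter_upwards [ae_restrict_of_ae_restrict_of_subset Ioo_subset_Ioi_self heq',
          ae_restrict_mem measurableSet_Ioo] with t ht htmem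
        rw [ht]
        exact le_trans ENNReal.ofReal_add_le
          (add_le_add_right ((hofc t htmem.1).1) _)
      calc IT = ∫⁻ t in Ioo (0:ℝ) T, ENNReal.ofReal (r t) := hITr
        _ ≤ ∫⁻ t in Ioo (0:ℝ) T, (ENNReal.ofReal (g t) + L t) := lintegral_mono_ae hmono
        _ = (∫⁻ t in Ioo (0:ℝ) T, ENNReal.ofReal (g t)) + ∫⁻ t in Ioo (0:ℝ) T, L t :=
            lintegral_add_left (by fun_prop) _
        _ ≤ A + A * IT := add_le_add (lintegral_mono_set Ioo_subset_Ioi_self) (hswapT T hT)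
    -- solve the inequality
    set x : ℝ := IT.toReal with hxdef
    have hxnn : 0 ≤ x := ENNReal.toReal_nonneg
    have hITx : IT = ENNReal.ofReal x := (ENNReal.ofReal_toReal hITtop).symm
    have hxineq : x ≤ α + α * x := by
      have h1 : ENNReal.ofReal x ≤ ENNReal.ofReal (α + α * x) := by
        calc ENNReal.ofReal x = IT := hITx.symm
          _ ≤ A + A * IT := hkey
          _ = ENNReal.ofReal (α + α * x) := by
              rw [hA, hITx, ← ENNReal.ofReal_mul hαnn,
                ← ENNReal.ofReal_add hαnn (mul_nonneg hαnn hxnn)]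
      exact (ENNReal.ofReal_le_ofReal_iff (by nlinarith)).1 h1
    rw [hITx, hcdef]
    apply ENNReal.ofReal_le_ofReal
    rw [le_div_iff₀ (by linarith)]
    nlinarith
  -- I is finite
  have hIc : I ≤ c := by
    have hfn : ∀ n : ℕ, Measurable fun t =>
        (Ioo (0:ℝ) (n + 1)).indicator (fun t => ENNReal.ofReal (r' t)) t :=
      fun n => (by fun_prop : Measurable fun t => ENNReal.ofReal (r' t)).indicator
        measurableSet_Ioo
    have hmono : Monotone fun (n : ℕ) (t : ℝ) =>
        (Ioo (0:ℝ) (n + 1)).indicator (fun t => ENNReal.ofReal (r' t)) t := by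
      intro m n hmn
      have hc : (m:ℝ) ≤ n := Nat.cast_le.mpr hmn
      exact Set.indicator_le_indicator_of_subset
        (Ioo_subset_Ioo le_rfl (by linarith)) (fun t => zero_le)
    have hsup : ∀ t ∈ Ioi (0:ℝ), (⨆ n : ℕ,
        (Ioo (0:ℝ) (n + 1)).indicator (fun t => ENNReal.ofReal (r' t)) t)
        = ENNReal.ofReal (r' t) := by
      intro t ht
      apply le_antisymm
      · exact iSup_le fun n => Set.indicator_le_self _ _ t
      · obtain ⟨n, hn⟩ := exists_nat_gt t
        refine le_trans ?_ (le_iSup _ n)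
        rw [Set.indicator_of_mem (mem_Ioo.2 ⟨mem_Ioi.1 ht, by linarith⟩)]
    calc I = ∫⁻ t in Ioi (0:ℝ), ⨆ n : ℕ,
          (Ioo (0:ℝ) (n + 1)).indicator (fun t => ENNReal.ofReal (r' t)) t := by
          rw [hIdef]
          exact (setLIntegral_congr_fun measurableSet_Ioi hsup).symm
      _ = ⨆ n : ℕ, ∫⁻ t in Ioi (0:ℝ),
          (Ioo (0:ℝ) (n + 1)).indicator (fun t => ENNReal.ofReal (r' t)) t :=
          lintegral_iSup hfn hmono
      _ ≤ c := by
          refine iSup_le fun n => ?_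
          rw [lintegral_indicator measurableSet_Ioo,
            Measure.restrict_restrict measurableSet_Ioo,
            Set.inter_eq_self_of_subset_left Ioo_subset_Ioi_self]
          exact htrunc (n + 1) (by positivity)
  have hItop : I ≠ ⊤ := (hIc.trans_lt ENNReal.ofReal_lt_top).ne
  -- the exact equation
  have hIeq : I = A + A * I := by
    have hLae : ∀ᵐ t ∂(volume.restrict (Ioi (0:ℝ))), L t < ⊤ := by
      apply ae_lt_top hLmeas
      rw [hswapfull]
      exact ENNReal.mul_ne_top hAtop hItop
    have hmain : ∀ᵐ t ∂(volume.restrict (Ioi (0:ℝ))),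
        ENNReal.ofReal (r t) = ENNReal.ofReal (g t) + L t := by
      filter_upwards [heq', hLae, ae_restrict_mem measurableSet_Ioi] with t ht hLt htmem
      have hcnn : 0 ≤ ∫ s in (0:ℝ)..t, g (t - s) * r s := by
        apply intervalIntegral.integral_nonneg (le_of_lt htmem)
        intro s hs
        exact mul_nonneg (hgnn _) (hrnonneg s hs.1)
      rw [ht, ENNReal.ofReal_add (hgnn t) hcnn, (hofc t htmem).2 hLt]
    calc I = ∫⁻ t in Ioi (0:ℝ), ENNReal.ofReal (r t) := hIr
      _ = ∫⁻ t in Ioi (0:ℝ), (ENNReal.ofReal (g t) + L t) := lintegral_congr_ae hmain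
      _ = (∫⁻ t in Ioi (0:ℝ), ENNReal.ofReal (g t)) + ∫⁻ t in Ioi (0:ℝ), L t :=
          lintegral_add_left (by fun_prop) _
      _ = A + A * I := by rw [hswapfull]
  -- conclude
  set x : ℝ := I.toReal with hxdef
  have hxnn : 0 ≤ x := ENNReal.toReal_nonneg
  have hxeq : x = α + α * x := by
    have := congrArg ENNReal.toReal hIeq
    rwa [ENNReal.toReal_add hAtop (ENNReal.mul_ne_top hAtop hItop),
      ENNReal.toReal_mul, hA, ENNReal.toReal_ofReal hαnn] at this
  have hxval : x = α / (1 - α) := by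
    rw [eq_div_iff (by linarith : (1:ℝ) - α ≠ 0)]
    linarith [hxeq]
  have hint : IntegrableOn r (Ioi 0) := by
    refine ⟨(hr'meas.aemeasurable.congr hrr'.symm).aestronglyMeasurable, ?_⟩
    rw [hasFiniteIntegral_def]
    have heqI : (∫⁻ t in Ioi (0:ℝ), (‖r t‖₊ : ℝ≥0∞)) = I := by
      rw [hIr]
      apply lintegral_congr_ae
      filter_upwards [ae_restrict_mem measurableSet_Ioi] with t ht
      rw [← Real.enorm_eq_ofReal (hrnonneg t (le_of_lt ht))]; rfl
    rw [show (∫⁻ t in Ioi (0:ℝ), ‖r t‖ₑ) = I from heqI]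
    exact hItop.lt_top
  refine ⟨hint, ?_⟩
  have hir : ∫ s in Ioi (0:ℝ), r s = x := by
    rw [integral_eq_lintegral_of_nonneg_ae
      ((ae_restrict_mem measurableSet_Ioi).mono fun t ht => hrnonneg t (le_of_lt ht))
      hint.1, ← hIr, hxdef]
  rw [hir, hxval]
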